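/- If f = Σ_{n≥1} a_n q^n is a nonzero quasimodular eigenform of weight k on SL₂(ℤ) whose constant Fourier coefficient vanishes, then a_1 ≠ 0. Consequently, if f and g are quasimodular eigenforms of weights k and l, each with vanishing constant Fourier coefficient, then the product fg is not an eigenform of weight k + l. -/

import Mathlib

open Complex BigOperators

noncomputable section

/-- The upper half-plane ℍ, viewed as a subset of ℂ. -/
def UpperHalf : Set ℂ := {z : ℂ | 0 < z.im}

/-- The differential operator `D = (1/(2πi)) d/dz`. -/
def Dop (f : ℂ → ℂ) : ℂ → ℂ := fun z => (1 / (2 * (Real.pi : ℂ) * I)) * deriv f z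

/-- The `n`-th Hecke operator in weight `k`:
`(T_n^{(k)} f)(z) = n^{k-1} Σ_{d|n} d^{-k} Σ_{b=0}^{d-1} f((nz + bd)/d²)`. -/
def hecke (k : ℤ) (n : ℕ) (f : ℂ → ℂ) : ℂ → ℂ := fun z =>
  (n : ℂ) ^ (k - 1) * ∑ d ∈ n.divisors, (d : ℂ) ^ (-k) *
    ∑ b ∈ Finset.range d, f (((n : ℂ) * z + (b : ℂ) * (d : ℂ)) / ((d : ℂ) ^ 2))

/-- `σ_k(m) = Σ_{d|m} d^k`. -/
def sigmaFn (k m : ℕ) : ℕ := ∑ d ∈ m.divisors, d ^ k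

/-- The Eisenstein series `E_k(z) = 1 − (2k/B_k) Σ_{m≥1} σ_{k−1}(m) q^m`, `q = e^{2πiz}`. -/
def Eis (k : ℕ) : ℂ → ℂ := fun z =>
  1 - (2 * (k : ℂ) / ((bernoulli k : ℚ) : ℂ)) *
    ∑' m : ℕ, ((sigmaFn (k - 1) (m + 1) : ℕ) : ℂ) *
      Complex.exp (2 * (Real.pi : ℂ) * I * z) ^ (m + 1)

/-- The nearly holomorphic Eisenstein series `E_2*(z) = E_2(z) − 3/(π Im z)`. -/
def E2star : ℂ → ℂ := fun z => Eis 2 z - 3 / ((Real.pi : ℂ) * (z.im : ℂ))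

/-- `Δ_12 = (E_4³ − E_6²)/1728`, the discriminant cusp form of weight 12. -/
def Delta12 : ℂ → ℂ := fun z => (Eis 4 z ^ 3 - Eis 6 z ^ 2) / 1728

/-- `Δ_16`, the unique normalized cusp form of weight 16 (equal to `E_4 Δ_12`). -/
def Delta16 : ℂ → ℂ := fun z => Eis 4 z * Delta12 z

/-- `Δ_18`, the unique normalized cusp form of weight 18 (equal to `E_6 Δ_12`). -/
def Delta18 : ℂ → ℂ := fun z => Eis 6 z * Delta12 z

/-- `Δ_20`, the unique normalized cusp form of weight 20 (equal to `E_8 Δ_12`). -/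
def Delta20 : ℂ → ℂ := fun z => Eis 8 z * Delta12 z

/-- `Δ_22`, the unique normalized cusp form of weight 22 (equal to `E_10 Δ_12`). -/
def Delta22 : ℂ → ℂ := fun z => Eis 10 z * Delta12 z

/-- `Δ_26`, the unique normalized cusp form of weight 26 (equal to `E_14 Δ_12`). -/
def Delta26 : ℂ → ℂ := fun z => Eis 14 z * Delta12 z

/-- A quasimodular form of weight `k` on `SL₂(ℤ)`: a ℂ-linear combination of monomials
`E_2^a E_4^b E_6^c` with `2a + 4b + 6c = k` (as a function on the upper half-plane). -/
def IsQuasimodular (k : ℕ) (f : ℂ → ℂ) : Prop :=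
  ∃ (S : Finset (ℕ × ℕ × ℕ)) (c : ℕ × ℕ × ℕ → ℂ),
    (∀ t ∈ S, 2 * t.1 + 4 * t.2.1 + 6 * t.2.2 = k) ∧
    ∀ z ∈ UpperHalf,
      f z = ∑ t ∈ S, c t * Eis 2 z ^ t.1 * Eis 4 z ^ t.2.1 * Eis 6 z ^ t.2.2

/-- A quasimodular form of weight `k` and depth `≤ p`: a ℂ-linear combination of monomials
`E_2^a E_4^b E_6^c` with `2a + 4b + 6c = k` and `a ≤ p`. -/
def IsQuasimodularDepth (k p : ℕ) (f : ℂ → ℂ) : Prop :=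
  ∃ (S : Finset (ℕ × ℕ × ℕ)) (c : ℕ × ℕ × ℕ → ℂ),
    (∀ t ∈ S, 2 * t.1 + 4 * t.2.1 + 6 * t.2.2 = k ∧ t.1 ≤ p) ∧
    ∀ z ∈ UpperHalf,
      f z = ∑ t ∈ S, c t * Eis 2 z ^ t.1 * Eis 4 z ^ t.2.1 * Eis 6 z ^ t.2.2

/-- `f` satisfies the Hecke eigenform equations of weight `k` on ℍ: for every `n ≥ 1`
there is `λ_n ∈ ℂ` with `T_n^{(k)} f = λ_n f` on the upper half-plane. -/
def IsEigenOn (k : ℤ) (f : ℂ → ℂ) : Prop :=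
  ∀ n : ℕ, 1 ≤ n → ∃ c : ℂ, ∀ z ∈ UpperHalf, hecke k n f z = c * f z

/-- An eigenform of weight `k`: a function that is nonzero on ℍ and satisfies the Hecke
eigenform equations of weight `k`. -/
def IsEigenform (k : ℤ) (f : ℂ → ℂ) : Prop :=
  (∃ z ∈ UpperHalf, f z ≠ 0) ∧ IsEigenOn k f

/-- A holomorphic modular form of weight `k` on `SL₂(ℤ)`: holomorphic on ℍ, satisfying the
weight-`k` modular transformation law, and bounded as `Im z → ∞`. -/
def IsModularForm (k : ℤ) (f : ℂ → ℂ) : Prop :=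
  DifferentiableOn ℂ f UpperHalf ∧
  (∀ a b c d : ℤ, a * d - b * c = 1 → ∀ z ∈ UpperHalf,
      f (((a : ℂ) * z + (b : ℂ)) / ((c : ℂ) * z + (d : ℂ))) =
        ((c : ℂ) * z + (d : ℂ)) ^ k * f z) ∧
  ∃ C : ℝ, ∀ z ∈ UpperHalf, 1 ≤ z.im → ‖f z‖ ≤ C

/-- `f` is a nonzero scalar multiple of `F` (as functions on the upper half-plane). -/
def ScalarOf (f F : ℂ → ℂ) : Prop := ∃ c : ℂ, c ≠ 0 ∧ ∀ z ∈ UpperHalf, f z = c * F z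

/-- The unordered pair `{f, g}` equals `{F, G}` up to nonzero scalar multiples. -/
def UPair (f g F G : ℂ → ℂ) : Prop :=
  (ScalarOf f F ∧ ScalarOf g G) ∨ (ScalarOf f G ∧ ScalarOf g F)

/-- If `f = Σ_{n≥1} a_n q^n` is a nonzero quasimodular eigenform of weight `k` with vanishing
constant Fourier coefficient, then `a_1 ≠ 0`; consequently, the product of two quasimodular
eigenforms with vanishing constant Fourier coefficients is not an eigenform. -/
lemma coef_bound (c : ℕ → ℂ) (h : Summable (fun m => c m * (1/2 : ℂ) ^ m)) :
    ∃ M : ℝ, 0 ≤ M ∧ ∀ j, ‖c j‖ ≤ M * 2 ^ j := by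
  have ht : Filter.Tendsto (fun m => ‖c m * (1/2 : ℂ) ^ m‖) Filter.atTop (nhds 0) := by
    simpa using (h.tendsto_atTop_zero.norm)
  obtain ⟨M, hM⟩ := ht.bddAbove_range
  refine ⟨M, le_trans (norm_nonneg _) (hM ⟨0, rfl⟩), fun j => ?_⟩
  have h1 : ‖c j * (1/2 : ℂ) ^ j‖ ≤ M := hM ⟨j, rfl⟩
  have h2 : ‖c j * (1/2 : ℂ) ^ j‖ = ‖c j‖ * (1/2 : ℝ) ^ j := by
    simp [norm_mul, norm_pow]
  rw [h2] at h1
  have h3 : (0:ℝ) < (1/2 : ℝ) ^ j := by positivity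
  calc ‖c j‖ = (‖c j‖ * (1/2:ℝ)^j) * 2 ^ j := by
        rw [mul_assoc]; norm_num [← mul_pow]
    _ ≤ M * 2 ^ j := by
        apply mul_le_mul_of_nonneg_right h1; positivity

lemma coef_zero (c : ℕ → ℂ)
    (h : ∀ w : ℂ, ‖w‖ < 1 → w ≠ 0 → HasSum (fun m => c m * w ^ m) 0) :
    ∀ m, c m = 0 := by
  have hhalf : ‖(1/2 : ℂ)‖ < 1 := by norm_num
  obtain ⟨M, hM0, hM⟩ := coef_bound c (h (1/2) hhalf (by norm_num)).summable
  intro m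
  induction m using Nat.strong_induction_on with
  | _ m ih =>
  -- key estimate for each small ε
  have key : ∀ ε : ℝ, 0 < ε → ε ≤ 1/4 → ‖c m‖ ≤ M * 2 ^ (m+2) * ε := by
    intro ε hε hε4
    have hεn : ‖(ε:ℂ)‖ < 1 := by
      rw [Complex.norm_real, Real.norm_eq_abs, abs_of_pos hε]; linarith
    have hne : (ε:ℂ) ≠ 0 := by exact_mod_cast hε.ne'
    have hs := h (ε:ℂ) hεn hne
    -- terms below m vanish
    have hhead : ∑ j ∈ Finset.range (m+1), c j * (ε:ℂ) ^ j = c m * (ε:ℂ) ^ m := by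
      rw [Finset.sum_range_succ]
      have : ∑ j ∈ Finset.range m, c j * (ε:ℂ) ^ j = 0 := by
        apply Finset.sum_eq_zero; intro j hj
        rw [ih j (Finset.mem_range.mp hj)]; ring
      rw [this]; ring
    have htail : HasSum (fun i => c (i + (m+1)) * (ε:ℂ) ^ (i + (m+1)))
        (-(c m * (ε:ℂ) ^ m)) := by
      exact (hasSum_nat_add_iff (f := fun j => c j * (ε:ℂ)^j) (m+1)
        (g := -(c m * (ε:ℂ)^m))).mpr (by rw [hhead]; simpa using hs)
    -- bound the tail
    have h2ε : (0:ℝ) < 2*ε := by linarith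
    have h2ε1 : 2*ε < 1 := by linarith
    have hgs : Summable (fun i : ℕ => M * (2*ε) ^ (m+1) * (2*ε)^i) := by
      apply Summable.mul_left
      exact summable_geometric_of_lt_one (by linarith) h2ε1
    have hnorm_s : Summable (fun i => ‖c (i + (m+1)) * (ε:ℂ) ^ (i + (m+1))‖) :=
      summable_norm_iff.mpr htail.summable
    have hb : ∀ i : ℕ, ‖c (i + (m+1)) * (ε:ℂ) ^ (i + (m+1))‖ ≤ M * (2*ε) ^ (m+1) * (2*ε)^i := by
      intro i
      rw [norm_mul, norm_pow, Complex.norm_real, Real.norm_eq_abs, abs_of_pos hε]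
      calc ‖c (i+(m+1))‖ * ε ^ (i+(m+1)) ≤ (M * 2 ^ (i+(m+1))) * ε ^ (i+(m+1)) := by
            apply mul_le_mul_of_nonneg_right (hM _); positivity
        _ = M * (2*ε) ^ (m+1) * (2*ε)^i := by rw [mul_pow, pow_add, mul_pow]; ring
    have hbound : ‖c m * (ε:ℂ) ^ m‖ ≤ M * (2*ε) ^ (m+1) * (1 - 2*ε)⁻¹ := by
      rw [← norm_neg]
      rw [← htail.tsum_eq]
      calc ‖∑' i, c (i + (m+1)) * (ε:ℂ) ^ (i + (m+1))‖
          ≤ ∑' i, ‖c (i + (m+1)) * (ε:ℂ) ^ (i + (m+1))‖ := norm_tsum_le_tsum_norm hnorm_s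
        _ ≤ ∑' i : ℕ, M * (2*ε) ^ (m+1) * (2*ε)^i := Summable.tsum_le_tsum hb hnorm_s hgs
        _ = M * (2*ε) ^ (m+1) * (1 - 2*ε)⁻¹ := by
            rw [tsum_mul_left, tsum_geometric_of_lt_one (by linarith) h2ε1]
    have hinv : (1 - 2*ε)⁻¹ ≤ 2 := by
      rw [inv_le_comm₀ (by linarith) (by norm_num)]; linarith
    have hnn : ‖c m * (ε:ℂ) ^ m‖ = ‖c m‖ * ε ^ m := by
      rw [norm_mul, norm_pow, Complex.norm_real, Real.norm_eq_abs, abs_of_pos hε]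
    have hfin : ‖c m‖ * ε ^ m ≤ (M * 2 ^ (m+2) * ε) * ε ^ m := by
      rw [← hnn]
      calc ‖c m * (ε:ℂ) ^ m‖ ≤ M * (2*ε) ^ (m+1) * (1 - 2*ε)⁻¹ := hbound
        _ ≤ M * (2*ε) ^ (m+1) * 2 := by
            apply mul_le_mul_of_nonneg_left hinv; positivity
        _ = (M * 2 ^ (m+2) * ε) * ε ^ m := by rw [mul_pow]; ring
    have hεm : (0:ℝ) < ε ^ m := by positivity
    exact le_of_mul_le_mul_right hfin hεm
  -- let ε → 0
  have hseq : Filter.Tendsto (fun n : ℕ => M * 2 ^ (m+2) * (1/(n+4) : ℝ))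
      Filter.atTop (nhds 0) := by
    have : Filter.Tendsto (fun n : ℕ => (1/(n+4) : ℝ)) Filter.atTop (nhds 0) := by
      have h1 : Filter.Tendsto (fun n : ℕ => ((n:ℝ)+4)) Filter.atTop Filter.atTop := by
        apply Filter.tendsto_atTop_add_const_right
        exact tendsto_natCast_atTop_atTop
      simp only [one_div]; exact h1.inv_tendsto_atTop
    simpa using this.const_mul (M * 2 ^ (m+2))
  have hle : ‖c m‖ ≤ 0 := by
    apply ge_of_tendsto' hseq
    intro n
    apply key
    · positivity
    · rw [div_le_div_iff₀ (by positivity) (by norm_num)]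
      push_cast; linarith [Nat.cast_nonneg (α := ℝ) n]
  have := norm_nonneg (c m)
  have : ‖c m‖ = 0 := le_antisymm hle this
  simpa using this

lemma qcoef_zero (c : ℕ → ℂ)
    (h : ∀ z ∈ UpperHalf, HasSum (fun m => c m * Complex.exp (2*(Real.pi:ℂ)*I*z) ^ m) 0) :
    ∀ m, c m = 0 := by
  apply coef_zero
  intro w hw1 hw0
  have hpi : (Real.pi:ℂ) ≠ 0 := ofReal_ne_zero.mpr Real.pi_ne_zero
  have h2 : 2*(Real.pi:ℂ)*I ≠ 0 := by simp [hpi, I_ne_zero]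
  set z := Complex.log w / (2*(Real.pi:ℂ)*I) with hzdef
  have hmul : 2*(Real.pi:ℂ)*I*z = Complex.log w := by
    rw [hzdef]; field_simp
  have hzU : z ∈ UpperHalf := by
    have habs : 0 < ‖w‖ := norm_pos_iff.mpr hw0
    have hlog : Real.log ‖w‖ < 0 :=
      Real.log_neg habs hw1
    have him : z.im = -(Real.log ‖w‖) / (2*Real.pi) := by
      rw [hzdef]
      simp [Complex.div_im, Complex.normSq_apply, Complex.log_re, Complex.log_im]
      field_simp
    show 0 < z.im
    rw [him]
    apply div_pos (by linarith) (by positivity)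
  have := h z hzU
  rwa [hmul, Complex.exp_log hw0] at this

lemma step_d (n d : ℕ) (hn : 1 ≤ n) (hd : d ∣ n) (f : ℂ → ℂ) (a : ℕ → ℂ)
    (ha : ∀ z ∈ UpperHalf,
      HasSum (fun m : ℕ => a m * Complex.exp (2 * (Real.pi : ℂ) * I * z) ^ m) (f z))
    (z : ℂ) (hz : z ∈ UpperHalf) :
    HasSum (fun M : ℕ => (if (n/d : ℕ) ∣ M then (d:ℂ) * a (d * (M/(n/d))) else 0) *
        Complex.exp (2 * (Real.pi : ℂ) * I * z) ^ M)
      (∑ b ∈ Finset.range d, f (((n : ℂ) * z + (b : ℂ) * (d : ℂ)) / ((d : ℂ) ^ 2))) := by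
  have hd0 : 0 < d := Nat.pos_of_dvd_of_pos hd (by omega)
  have hdc : (d:ℂ) ≠ 0 := Nat.cast_ne_zero.mpr hd0.ne'
  set e : ℕ := n / d with hedef
  have hde : d * e = n := Nat.mul_div_cancel' hd
  have he0 : 0 < e := Nat.div_pos (Nat.le_of_dvd (by omega) hd) hd0
  set A : ℂ := Complex.exp (2 * (Real.pi : ℂ) * I * ((n : ℂ) * z / (d:ℂ)^2)) with hA
  set ζ : ℂ := Complex.exp (2 * (Real.pi : ℂ) * I / (d:ℂ)) with hζ
  set Q : ℂ := Complex.exp (2 * (Real.pi : ℂ) * I * z) with hQ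
  have hprim : IsPrimitiveRoot ζ d := Complex.isPrimitiveRoot_exp d hd0.ne'
  have hwU : ∀ b : ℕ, ((n : ℂ) * z + (b : ℂ) * (d : ℂ)) / ((d : ℂ) ^ 2) ∈ UpperHalf := by
    intro b
    have hzim : 0 < z.im := hz
    show 0 < ((((n : ℂ) * z + (b : ℂ) * (d : ℂ)) / ((d : ℂ) ^ 2))).im
    have hc2 : ((d:ℂ))^2 = ((d^2 : ℕ) : ℂ) := by push_cast; ring
    have him : (((n : ℂ) * z + (b : ℂ) * (d : ℂ)) / ((d : ℂ) ^ 2)).im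
        = (n : ℝ) * z.im / (d:ℝ)^2 := by
      have hd2 : ((d:ℝ)) ≠ 0 := Nat.cast_ne_zero.mpr hd0.ne'
      simp [pow_two, Complex.div_im, Complex.add_im, Complex.mul_im, Complex.normSq_apply,
        Complex.add_re, Complex.mul_re, Complex.natCast_re, Complex.natCast_im]
      field_simp
    rw [him]
    have hnp : (0:ℝ) < (n:ℝ) := by exact_mod_cast (by omega : 0 < n)
    positivity
  have hexp : ∀ b : ℕ,
      Complex.exp (2 * (Real.pi : ℂ) * I * (((n : ℂ) * z + (b : ℂ) * (d : ℂ)) / ((d : ℂ) ^ 2)))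
        = A * ζ ^ b := by
    intro b
    rw [hA, hζ, ← Complex.exp_nat_mul, ← Complex.exp_add]
    congr 1
    field_simp
  have hsum : HasSum
      (fun m : ℕ => ∑ b ∈ Finset.range d, a m * (A * ζ ^ b) ^ m)
      (∑ b ∈ Finset.range d,
        f (((n : ℂ) * z + (b : ℂ) * (d : ℂ)) / ((d : ℂ) ^ 2))) := by
    apply hasSum_sum
    intro b _
    have := ha _ (hwU b)
    rwa [hexp b] at this
  have hpt : ∀ m : ℕ, (∑ b ∈ Finset.range d, a m * (A * ζ ^ b) ^ m)
      = if d ∣ m then (d:ℂ) * a m * A ^ m else 0 := by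
    intro m
    have h1 : ∀ b, a m * (A * ζ ^ b) ^ m = a m * A ^ m * (ζ ^ m) ^ b := by
      intro b
      rw [mul_pow, ← pow_mul, ← pow_mul, mul_comm b m, pow_mul]
      ring
    simp only [h1, ← Finset.mul_sum]
    by_cases hdm : d ∣ m
    · rw [if_pos hdm, (hprim.pow_eq_one_iff_dvd m).mpr hdm]
      simp
      ring
    · rw [if_neg hdm]
      have hne : ζ ^ m ≠ 1 := fun hh => hdm ((hprim.pow_eq_one_iff_dvd m).mp hh)
      rw [geom_sum_eq hne, ← pow_mul, mul_comm m d, pow_mul, hprim.pow_eq_one]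
      simp
  rw [show (fun m : ℕ => ∑ b ∈ Finset.range d, a m * (A * ζ ^ b) ^ m)
      = fun m : ℕ => if d ∣ m then (d:ℂ) * a m * A ^ m else 0 from funext hpt] at hsum
  have hinj1 : Function.Injective (fun m' : ℕ => d * m') := fun x y hxy => by
    simpa [Nat.mul_right_inj hd0.ne'] using hxy
  have hv : ∀ m ∉ Set.range (fun m' : ℕ => d * m'),
      (if d ∣ m then (d:ℂ) * a m * A ^ m else 0) = 0 := by
    intro m hm
    rw [if_neg]
    rintro ⟨m', hm'⟩
    exact hm ⟨m', hm'.symm⟩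
  have hsum2 : HasSum (fun m' : ℕ => (d:ℂ) * a (d * m') * A ^ (d * m'))
      (∑ b ∈ Finset.range d,
        f (((n : ℂ) * z + (b : ℂ) * (d : ℂ)) / ((d : ℂ) ^ 2))) := by
    have h' := (hinj1.hasSum_iff hv).mpr hsum
    simpa [Function.comp_def, dvd_mul_right] using h'
  have hpow : ∀ m' : ℕ, A ^ (d * m') = Q ^ (e * m') := by
    intro m'
    rw [hA, hQ, ← Complex.exp_nat_mul, ← Complex.exp_nat_mul]
    congr 1
    have hn' : (n:ℂ) = (d:ℂ) * (e:ℂ) := by exact_mod_cast congrArg (Nat.cast (R := ℂ)) hde.symm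
    push_cast
    rw [hn']
    field_simp
  rw [show (fun m' : ℕ => (d:ℂ) * a (d * m') * A ^ (d * m'))
      = fun m' : ℕ => (d:ℂ) * a (d * m') * Q ^ (e * m') from
      funext fun m' => by rw [hpow m']] at hsum2
  have hinj2 : Function.Injective (fun m' : ℕ => e * m') := fun x y hxy => by
    simpa [Nat.mul_right_inj he0.ne'] using hxy
  have hv2 : ∀ M ∉ Set.range (fun m' : ℕ => e * m'),
      ((if e ∣ M then (d:ℂ) * a (d * (M/e)) else 0) * Q ^ M) = 0 := by
    intro M hM
    rw [if_neg, zero_mul]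
    rintro ⟨m', h⟩
    exact hM ⟨m', h.symm⟩
  apply (hinj2.hasSum_iff hv2).mp
  have hcomp : ((fun M : ℕ => (if e ∣ M then (d:ℂ) * a (d * (M/e)) else 0) * Q ^ M)
      ∘ fun m' : ℕ => e * m') = fun m' : ℕ => (d:ℂ) * a (d * m') * Q ^ (e * m') := by
    funext m'
    simp only [Function.comp_def]
    rw [if_pos (dvd_mul_right e m'), Nat.mul_div_cancel_left m' he0]
  rw [hcomp]
  exact hsum2

def tcoef (k : ℤ) (n : ℕ) (a : ℕ → ℂ) (M : ℕ) : ℂ :=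
  ∑ d ∈ n.divisors, (n : ℂ) ^ (k - 1) * (d : ℂ) ^ (-k) *
    (if (n / d : ℕ) ∣ M then (d:ℂ) * a (d * (M / (n / d))) else 0)

lemma hecke_hasSum (k : ℤ) (n : ℕ) (hn : 1 ≤ n) (f : ℂ → ℂ) (a : ℕ → ℂ)
    (ha : ∀ z ∈ UpperHalf,
      HasSum (fun m : ℕ => a m * Complex.exp (2 * (Real.pi : ℂ) * I * z) ^ m) (f z))
    (z : ℂ) (hz : z ∈ UpperHalf) :
    HasSum (fun M : ℕ => tcoef k n a M * Complex.exp (2 * (Real.pi : ℂ) * I * z) ^ M)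
      (hecke k n f z) := by
  have hstep : ∀ d ∈ n.divisors, HasSum
      (fun M : ℕ => (n:ℂ)^(k-1) * ((d:ℂ)^(-k) *
        ((if (n/d:ℕ) ∣ M then (d:ℂ) * a (d * (M/(n/d))) else 0) *
          Complex.exp (2 * (Real.pi : ℂ) * I * z) ^ M)))
      ((n:ℂ)^(k-1) * ((d:ℂ)^(-k) *
        ∑ b ∈ Finset.range d, f (((n : ℂ) * z + (b : ℂ) * (d : ℂ)) / ((d : ℂ) ^ 2)))) := by
    intro d hdmem
    have hd := (Nat.mem_divisors.mp hdmem).1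
    exact ((step_d n d hn hd f a ha z hz).mul_left _).mul_left _
  have hs := hasSum_sum hstep
  have hfun : (fun M : ℕ => ∑ d ∈ n.divisors, (n:ℂ)^(k-1) * ((d:ℂ)^(-k) *
        ((if (n/d:ℕ) ∣ M then (d:ℂ) * a (d * (M/(n/d))) else 0) *
          Complex.exp (2 * (Real.pi : ℂ) * I * z) ^ M)))
      = fun M : ℕ => tcoef k n a M * Complex.exp (2 * (Real.pi : ℂ) * I * z) ^ M := by
    funext M
    rw [tcoef, Finset.sum_mul]
    apply Finset.sum_congr rfl
    intro d _
    ring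
  rw [hfun] at hs
  have hval : (∑ d ∈ n.divisors, (n:ℂ)^(k-1) * ((d:ℂ)^(-k) *
      ∑ b ∈ Finset.range d, f (((n : ℂ) * z + (b : ℂ) * (d : ℂ)) / ((d : ℂ) ^ 2))))
      = hecke k n f z := by
    rw [hecke, Finset.mul_sum]
  rwa [hval] at hs

lemma tcoef_one (k : ℤ) (n : ℕ) (hn : 1 ≤ n) (a : ℕ → ℂ) : tcoef k n a 1 = a n := by
  have hn0 : n ≠ 0 := by omega
  have hnc : (n:ℂ) ≠ 0 := Nat.cast_ne_zero.mpr hn0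
  rw [tcoef, Finset.sum_eq_single_of_mem n (Nat.mem_divisors_self n hn0)]
  · rw [Nat.div_self (by omega)]
    simp only [Nat.one_dvd, if_pos, Nat.div_one, mul_one]
    have hzp : (n:ℂ)^(k-1) * (n:ℂ)^(-k) = ((n:ℂ))⁻¹ := by
      rw [← zpow_add₀ hnc]
      have : k - 1 + -k = -1 := by ring
      rw [this, zpow_neg_one]
    rw [mul_assoc, ← mul_assoc ((n:ℂ)^(k-1)), hzp]
    rw [← mul_assoc, inv_mul_cancel₀ hnc, one_mul]
  · intro d hdm hdn
    have hd := (Nat.mem_divisors.mp hdm).1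
    rw [if_neg, mul_zero]
    rw [Nat.dvd_one]
    intro h1
    apply hdn
    have h2 := Nat.div_mul_cancel hd
    rw [h1, one_mul] at h2
    exact h2

lemma eigen_zero (k : ℤ) (f : ℂ → ℂ) (a : ℕ → ℂ)
    (he : IsEigenOn k f)
    (ha : ∀ z ∈ UpperHalf,
      HasSum (fun m : ℕ => a m * Complex.exp (2 * (Real.pi : ℂ) * I * z) ^ m) (f z))
    (h0 : a 0 = 0) (h1 : a 1 = 0) : ∀ z ∈ UpperHalf, f z = 0 := by
  have han : ∀ m, a m = 0 := by
    intro m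
    rcases Nat.eq_zero_or_pos m with rfl | hm
    · exact h0
    obtain ⟨c, hc⟩ := he m hm
    have hdiff : ∀ z ∈ UpperHalf, HasSum
        (fun M : ℕ => (tcoef k m a M - c * a M) *
          Complex.exp (2 * (Real.pi : ℂ) * I * z) ^ M) 0 := by
      intro z hz
      have hhs := hecke_hasSum k m hm f a ha z hz
      rw [hc z hz] at hhs
      have hfs := (ha z hz).mul_left c
      have hsub := hhs.sub hfs
      have h2 : (fun M : ℕ => tcoef k m a M * Complex.exp (2 * (Real.pi : ℂ) * I * z) ^ M
            - c * (a M * Complex.exp (2 * (Real.pi : ℂ) * I * z) ^ M))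
          = fun M : ℕ => (tcoef k m a M - c * a M) *
            Complex.exp (2 * (Real.pi : ℂ) * I * z) ^ M := by
        funext M; ring
      rw [h2] at hsub
      simpa using hsub
    have hz1 := qcoef_zero _ hdiff 1
    rw [tcoef_one k m hm a, h1, mul_zero, sub_zero] at hz1
    exact hz1
  intro z hz
  have hfz := ha z hz
  simp only [han, zero_mul] at hfz
  exact hfz.unique hasSum_zero

lemma prod_hasSum (f g : ℂ → ℂ) (a b : ℕ → ℂ)
    (ha : ∀ z ∈ UpperHalf,
      HasSum (fun m : ℕ => a m * Complex.exp (2 * (Real.pi : ℂ) * I * z) ^ m) (f z))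
    (hb : ∀ z ∈ UpperHalf,
      HasSum (fun m : ℕ => b m * Complex.exp (2 * (Real.pi : ℂ) * I * z) ^ m) (g z))
    (z : ℂ) (hz : z ∈ UpperHalf) :
    HasSum (fun M : ℕ => (∑ ij ∈ Finset.HasAntidiagonal.antidiagonal M, a ij.1 * b ij.2) *
        Complex.exp (2 * (Real.pi : ℂ) * I * z) ^ M) (f z * g z) := by
  set Q : ℂ := Complex.exp (2 * (Real.pi : ℂ) * I * z) with hQ
  have hsa := (ha z hz).summable
  have hsb := (hb z hz).summable
  have hna : Summable (fun m : ℕ => ‖a m * Q ^ m‖) := summable_norm_iff.mpr hsa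
  have hnb : Summable (fun m : ℕ => ‖b m * Q ^ m‖) := summable_norm_iff.mpr hsb
  have hsum : Summable (fun M : ℕ => ∑ ij ∈ Finset.HasAntidiagonal.antidiagonal M,
      (a ij.1 * Q ^ ij.1) * (b ij.2 * Q ^ ij.2)) := by
    have h1 := summable_norm_sum_mul_antidiagonal_of_summable_norm hna hnb
    exact Summable.of_norm h1
  have hfun : (fun M : ℕ => ∑ ij ∈ Finset.HasAntidiagonal.antidiagonal M, (a ij.1 * Q ^ ij.1) * (b ij.2 * Q ^ ij.2))
      = fun M : ℕ => (∑ ij ∈ Finset.HasAntidiagonal.antidiagonal M, a ij.1 * b ij.2) * Q ^ M := by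
    funext M
    rw [Finset.sum_mul]
    apply Finset.sum_congr rfl
    intro ij hij
    have hm := Finset.HasAntidiagonal.mem_antidiagonal.mp hij
    rw [← hm, pow_add]
    ring
  have htsum := tsum_mul_tsum_eq_tsum_sum_antidiagonal_of_summable_norm hna hnb
  rw [(ha z hz).tsum_eq, (hb z hz).tsum_eq] at htsum
  have hfinal := (hsum.hasSum_iff).mpr htsum.symm
  rwa [hfun] at hfinal

theorem rankin_cohen_stmt6 (k : ℕ) (f : ℂ → ℂ) (a : ℕ → ℂ)
    (hfq : IsQuasimodular k f) (hfe : IsEigenform (k : ℤ) f)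
    (ha : ∀ z ∈ UpperHalf,
      HasSum (fun n : ℕ => a n * Complex.exp (2 * (Real.pi : ℂ) * I * z) ^ n) (f z))
    (ha0 : a 0 = 0) :
    a 1 ≠ 0 ∧
    ∀ (l : ℕ) (g : ℂ → ℂ) (b : ℕ → ℂ), IsQuasimodular l g → IsEigenform (l : ℤ) g →
      (∀ z ∈ UpperHalf,
        HasSum (fun n : ℕ => b n * Complex.exp (2 * (Real.pi : ℂ) * I * z) ^ n) (g z)) →
      b 0 = 0 →
      ¬ IsEigenform ((k : ℤ) + l) (fun z => f z * g z) := by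
  constructor
  · intro h1
    obtain ⟨z0, hz0, hne⟩ := hfe.1
    exact hne (eigen_zero (k : ℤ) f a hfe.2 ha ha0 h1 z0 hz0)
  · intro l g b _ hge hb hb0 hpe
    set ab : ℕ → ℂ := fun M => ∑ ij ∈ Finset.HasAntidiagonal.antidiagonal M, a ij.1 * b ij.2 with habdef
    have hab : ∀ z ∈ UpperHalf,
        HasSum (fun M : ℕ => ab M * Complex.exp (2 * (Real.pi : ℂ) * I * z) ^ M)
          (f z * g z) := fun z hz => prod_hasSum f g a b ha hb z hz
    have hab0 : ab 0 = 0 := by simp [habdef, ha0]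
    have hab1 : ab 1 = 0 := by
      show (∑ ij ∈ Finset.HasAntidiagonal.antidiagonal 1, a ij.1 * b ij.2) = 0
      rw [show Finset.HasAntidiagonal.antidiagonal 1 = {(0,1),(1,0)} from by decide]
      simp [ha0, hb0]
    have hvan := eigen_zero ((k : ℤ) + l) (fun z => f z * g z) ab hpe.2 hab hab0 hab1
    obtain ⟨z0, hz0, hne⟩ := hpe.1
    exact hne (hvan z0 hz0)
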